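/- Let A be a monoidal category and let (T, μ, η, ψ, ψ₀) be an opmonoidal monad on A. Then the following data define a right skew-monoidal structure on the underlying category of A: tensor product A∗B = A⊗TB; unit object I; associativity constraint α'_{X,Y,Z} = (1_X⊗1_{TY}⊗μ_Z)∘(1_X⊗ψ_{Y,TZ}) : X⊗T(Y⊗TZ) → (X⊗TY)⊗TZ; left unit constraint λ'_X = η_X : X → I⊗TX (composed with the unit isomorphism); right unit constraint ρ'_X = 1_X⊗ψ₀ : X⊗TI → X (composed with the unit isomorphism). That is, the five right skew-monoidal axioms hold. -/

import Mathlib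

open CategoryTheory MonoidalCategory

variable {V : Type*} [Category V] [MonoidalCategory V]

/-- An opmonoidal monad on the monoidal category `V`: a monad `(T, μ, η)` together with an
opmonoidal structure `(ψ, ψ₀)` on `T` for which `μ` and `η` are opmonoidal natural
transformations. -/
def IsOpmonoidalMonad (T : V ⥤ V)
    (μ : ∀ X : V, T.obj (T.obj X) ⟶ T.obj X) (η : ∀ X : V, X ⟶ T.obj X)
    (ψ : ∀ X Y : V, T.obj (X ⊗ Y) ⟶ T.obj X ⊗ T.obj Y)
    (ψ₀ : T.obj (𝟙_ V) ⟶ 𝟙_ V) : Prop :=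
  -- naturality of μ and η
  (∀ (X Y : V) (f : X ⟶ Y), T.map (T.map f) ≫ μ Y = μ X ≫ T.map f) ∧
  (∀ (X Y : V) (f : X ⟶ Y), f ≫ η Y = η X ≫ T.map f) ∧
  -- monad axioms
  (∀ X : V, μ (T.obj X) ≫ μ X = T.map (μ X) ≫ μ X) ∧
  (∀ X : V, η (T.obj X) ≫ μ X = 𝟙 (T.obj X)) ∧
  (∀ X : V, T.map (η X) ≫ μ X = 𝟙 (T.obj X)) ∧
  -- naturality of ψ
  (∀ (X X' Y Y' : V) (f : X ⟶ X') (g : Y ⟶ Y'),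
    T.map (f ⊗ₘ g) ≫ ψ X' Y' = ψ X Y ≫ (T.map f ⊗ₘ T.map g)) ∧
  -- opmonoidal functor axioms: coassociativity and counitality of ψ
  (∀ X Y Z : V,
    T.map (α_ X Y Z).hom ≫ ψ X (Y ⊗ Z) ≫ (T.obj X ◁ ψ Y Z) =
      ψ (X ⊗ Y) Z ≫ (ψ X Y ▷ T.obj Z) ≫ (α_ (T.obj X) (T.obj Y) (T.obj Z)).hom) ∧
  (∀ X : V, ψ (𝟙_ V) X ≫ (ψ₀ ▷ T.obj X) ≫ (λ_ (T.obj X)).hom = T.map (λ_ X).hom) ∧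
  (∀ X : V, ψ X (𝟙_ V) ≫ (T.obj X ◁ ψ₀) ≫ (ρ_ (T.obj X)).hom = T.map (ρ_ X).hom) ∧
  -- μ is opmonoidal
  (∀ X Y : V,
    T.map (ψ X Y) ≫ ψ (T.obj X) (T.obj Y) ≫ (μ X ⊗ₘ μ Y) = μ (X ⊗ Y) ≫ ψ X Y) ∧
  (T.map ψ₀ ≫ ψ₀ = μ (𝟙_ V) ≫ ψ₀) ∧
  -- η is opmonoidal
  (∀ X Y : V, η (X ⊗ Y) ≫ ψ X Y = η X ⊗ₘ η Y) ∧
  (η (𝟙_ V) ≫ ψ₀ = 𝟙 (𝟙_ V))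

/-- The associativity constraint `α'_{X,Y,Z} = (1_X ⊗ 1_{TY} ⊗ μ_Z) ∘ (1_X ⊗ ψ_{Y,TZ})`
of the right skew tensor `X ∗ Y = X ⊗ TY` induced by an opmonoidal monad. -/
def rightWarpAssoc (T : V ⥤ V)
    (μ : ∀ X : V, T.obj (T.obj X) ⟶ T.obj X)
    (ψ : ∀ X Y : V, T.obj (X ⊗ Y) ⟶ T.obj X ⊗ T.obj Y) (X Y Z : V) :
    X ⊗ T.obj (Y ⊗ T.obj Z) ⟶ (X ⊗ T.obj Y) ⊗ T.obj Z :=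
  (X ◁ ψ Y (T.obj Z)) ≫ (X ◁ (T.obj Y ◁ μ Z)) ≫
    (α_ X (T.obj Y) (T.obj Z)).inv

/-- An opmonoidal monad `(T, μ, η, ψ, ψ₀)` on a monoidal category `V`
determines a right skew-monoidal structure on `V` with tensor `X ∗ Y = X ⊗ TY`, unit `I`,
associativity `α' = (1 ⊗ 1 ⊗ μ) ∘ (1 ⊗ ψ)`, left unit `λ' = η` and right unit
`ρ' = 1 ⊗ ψ₀` (each composed with the appropriate unit isomorphism): the five right
skew-monoidal axioms hold. -/
theorem opmonoidal_monad_right_skew_monoidal (T : V ⥤ V)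
    (μ : ∀ X : V, T.obj (T.obj X) ⟶ T.obj X) (η : ∀ X : V, X ⟶ T.obj X)
    (ψ : ∀ X Y : V, T.obj (X ⊗ Y) ⟶ T.obj X ⊗ T.obj Y) (ψ₀ : T.obj (𝟙_ V) ⟶ 𝟙_ V)
    (h : IsOpmonoidalMonad T μ η ψ ψ₀) :
    -- (1) pentagon
    (∀ X Y Z W : V,
      rightWarpAssoc T μ ψ X Y (Z ⊗ T.obj W) ≫
          rightWarpAssoc T μ ψ (X ⊗ T.obj Y) Z W =
        (X ◁ T.map (rightWarpAssoc T μ ψ Y Z W)) ≫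
          rightWarpAssoc T μ ψ X (Y ⊗ T.obj Z) W ≫
          (rightWarpAssoc T μ ψ X Y Z ▷ T.obj W)) ∧
    -- (2)
    (∀ X Y : V,
      (X ◁ T.map (η Y ≫ (λ_ (T.obj Y)).inv)) ≫ rightWarpAssoc T μ ψ X (𝟙_ V) Y ≫
          (((X ◁ ψ₀) ≫ (ρ_ X).hom) ▷ T.obj Y) = 𝟙 (X ⊗ T.obj Y)) ∧
    -- (3)
    (∀ X Y : V,
      (η (X ⊗ T.obj Y) ≫ (λ_ (T.obj (X ⊗ T.obj Y))).inv) ≫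
          rightWarpAssoc T μ ψ (𝟙_ V) X Y =
        (η X ≫ (λ_ (T.obj X)).inv) ▷ T.obj Y) ∧
    -- (4)
    (∀ X Y : V,
      rightWarpAssoc T μ ψ X Y (𝟙_ V) ≫
          (((X ⊗ T.obj Y) ◁ ψ₀) ≫ (ρ_ (X ⊗ T.obj Y)).hom) =
        X ◁ T.map ((Y ◁ ψ₀) ≫ (ρ_ Y).hom)) ∧
    -- (5)
    ((η (𝟙_ V) ≫ (λ_ (T.obj (𝟙_ V))).inv) ≫
        ((𝟙_ V ◁ ψ₀) ≫ (ρ_ (𝟙_ V)).hom) = 𝟙 (𝟙_ V)) := by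
  obtain ⟨μnat, ηnat, massoc, munitl, munitr, ψnat, ψassoc, ψlef, ψrig, μop, μop0, ηop, ηop0⟩ := h
  have ψnatl : ∀ (X : V) {Y Y' : V} (g : Y ⟶ Y'),
      T.map (X ◁ g) ≫ ψ X Y' = ψ X Y ≫ (T.obj X ◁ T.map g) := by
    intro X Y Y' g
    have := ψnat X X Y Y' (𝟙 X) g
    simpa using this
  have key : ∀ Z W : V,
      T.map (ψ Z (T.obj W) ≫ (T.obj Z ◁ μ W)) ≫ ψ (T.obj Z) (T.obj W) ≫ (μ Z ⊗ₘ μ W) =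
        μ (Z ⊗ T.obj W) ≫ ψ Z (T.obj W) ≫ (T.obj Z ◁ μ W) := by
    intro Z W
    have h1 : (T.obj (T.obj Z) ◁ T.map (μ W)) ≫ (μ Z ⊗ₘ μ W) =
        (μ Z ⊗ₘ μ (T.obj W)) ≫ (T.obj Z ◁ μ W) := by
      rw [MonoidalCategory.tensorHom_def, MonoidalCategory.tensorHom_def, whisker_exchange_assoc]
      simp only [Category.assoc, ← MonoidalCategory.whiskerLeft_comp, ← massoc]
    rw [T.map_comp, Category.assoc]
    slice_lhs 2 3 => rw [ψnatl]
    slice_lhs 3 4 => rw [h1]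
    slice_lhs 1 3 => rw [μop]
    simp
  refine ⟨?_, ?_, ?_, ?_, ?_⟩
  · -- (1) pentagon
    intro X Y Z W
    have hr : rightWarpAssoc T μ ψ Y Z W ≫ (α_ Y (T.obj Z) (T.obj W)).hom =
        Y ◁ (ψ Z (T.obj W) ≫ (T.obj Z ◁ μ W)) := by
      simp [rightWarpAssoc]
    have key2 : μ (Z ⊗ T.obj W) ≫ ψ Z (T.obj W) ≫ (T.obj Z ◁ μ W) =
        T.map (ψ Z (T.obj W) ≫ (T.obj Z ◁ μ W)) ≫ ψ (T.obj Z) (T.obj W) ≫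
          (μ Z ▷ T.obj (T.obj W)) ≫ (T.obj Z ◁ μ W) := by
      rw [← key, MonoidalCategory.tensorHom_def]
    have inner :
        ψ Y (T.obj (Z ⊗ T.obj W)) ≫
            (T.obj Y ◁ (μ (Z ⊗ T.obj W) ≫ ψ Z (T.obj W) ≫ (T.obj Z ◁ μ W))) =
          T.map (rightWarpAssoc T μ ψ Y Z W) ≫ ψ (Y ⊗ T.obj Z) (T.obj W) ≫
            (T.obj (Y ⊗ T.obj Z) ◁ μ W) ≫
            ((ψ Y (T.obj Z) ≫ (T.obj Y ◁ μ Z)) ▷ T.obj W) ≫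
            (α_ (T.obj Y) (T.obj Z) (T.obj W)).hom := by
      rw [MonoidalCategory.comp_whiskerRight]
      slice_rhs 3 4 => rw [whisker_exchange]
      slice_rhs 4 5 => rw [whisker_exchange]
      slice_rhs 5 6 => rw [associator_naturality_right]
      slice_rhs 4 5 => rw [associator_naturality_middle]
      slice_rhs 2 4 => rw [← ψassoc]
      slice_rhs 1 2 => rw [← T.map_comp, hr]
      slice_rhs 1 2 => rw [ψnatl]
      rw [key2]
      simp only [MonoidalCategory.whiskerLeft_comp, Category.assoc]
    have hpent : (α_ X (T.obj Y ⊗ T.obj Z) (T.obj W)).inv ≫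
        ((α_ X (T.obj Y) (T.obj Z)).inv ▷ T.obj W) =
        (X ◁ (α_ (T.obj Y) (T.obj Z) (T.obj W)).hom) ≫
          (α_ X (T.obj Y) (T.obj Z ⊗ T.obj W)).inv ≫
          (α_ (X ⊗ T.obj Y) (T.obj Z) (T.obj W)).inv := by
      rw [← pentagon_inv, ← MonoidalCategory.whiskerLeft_comp_assoc, Iso.hom_inv_id,
        MonoidalCategory.whiskerLeft_id, Category.id_comp]
    simp only [rightWarpAssoc, Category.assoc]
    calc
      (X ◁ ψ Y (T.obj (Z ⊗ T.obj W))) ≫ (X ◁ (T.obj Y ◁ μ (Z ⊗ T.obj W))) ≫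
          (α_ X (T.obj Y) (T.obj (Z ⊗ T.obj W))).inv ≫
          ((X ⊗ T.obj Y) ◁ ψ Z (T.obj W)) ≫ ((X ⊗ T.obj Y) ◁ (T.obj Z ◁ μ W)) ≫
          (α_ (X ⊗ T.obj Y) (T.obj Z) (T.obj W)).inv
        = (X ◁ (ψ Y (T.obj (Z ⊗ T.obj W)) ≫
            (T.obj Y ◁ (μ (Z ⊗ T.obj W) ≫ ψ Z (T.obj W) ≫ (T.obj Z ◁ μ W))))) ≫
          (α_ X (T.obj Y) (T.obj Z ⊗ T.obj W)).inv ≫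
          (α_ (X ⊗ T.obj Y) (T.obj Z) (T.obj W)).inv := by
          rw [← associator_inv_naturality_right_assoc, ← associator_inv_naturality_right_assoc]
          simp only [MonoidalCategory.whiskerLeft_comp, Category.assoc]
      _ = (X ◁ (T.map (rightWarpAssoc T μ ψ Y Z W) ≫ ψ (Y ⊗ T.obj Z) (T.obj W) ≫
            (T.obj (Y ⊗ T.obj Z) ◁ μ W) ≫
            ((ψ Y (T.obj Z) ≫ (T.obj Y ◁ μ Z)) ▷ T.obj W) ≫
            (α_ (T.obj Y) (T.obj Z) (T.obj W)).hom)) ≫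
          (α_ X (T.obj Y) (T.obj Z ⊗ T.obj W)).inv ≫
          (α_ (X ⊗ T.obj Y) (T.obj Z) (T.obj W)).inv := by rw [inner]
      _ = (X ◁ T.map (rightWarpAssoc T μ ψ Y Z W)) ≫
          ((X ◁ ψ (Y ⊗ T.obj Z) (T.obj W)) ≫ (X ◁ (T.obj (Y ⊗ T.obj Z) ◁ μ W)) ≫
            (α_ X (T.obj (Y ⊗ T.obj Z)) (T.obj W)).inv) ≫
          (((X ◁ ψ Y (T.obj Z)) ≫ (X ◁ (T.obj Y ◁ μ Z)) ≫
            (α_ X (T.obj Y) (T.obj Z)).inv) ▷ T.obj W) := by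
          simp only [MonoidalCategory.whiskerLeft_comp, MonoidalCategory.comp_whiskerRight,
            Category.assoc]
          rw [← associator_inv_naturality_middle_assoc, ← associator_inv_naturality_middle_assoc,
            hpent]
      _ = X ◁ T.map (Y ◁ ψ Z (T.obj W) ≫ Y ◁ T.obj Z ◁ μ W ≫ (α_ Y (T.obj Z) (T.obj W)).inv) ≫
          X ◁ ψ (Y ⊗ T.obj Z) (T.obj W) ≫
          X ◁ T.obj (Y ⊗ T.obj Z) ◁ μ W ≫
          (α_ X (T.obj (Y ⊗ T.obj Z)) (T.obj W)).inv ≫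
          (X ◁ ψ Y (T.obj Z) ≫ X ◁ T.obj Y ◁ μ Z ≫ (α_ X (T.obj Y) (T.obj Z)).inv) ▷ T.obj W := by
          simp only [rightWarpAssoc, Category.assoc]
  · -- (2)
    intro X Y
    rw [rightWarpAssoc]
    have htr : (α_ X (𝟙_ V) (T.obj Y)).inv ≫ ((ρ_ X).hom ▷ T.obj Y) =
        X ◁ (λ_ (T.obj Y)).hom := by
      rw [← triangle, Iso.inv_hom_id_assoc]
    rw [MonoidalCategory.comp_whiskerRight, Category.assoc, Category.assoc,
      ← associator_inv_naturality_middle_assoc, htr]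
    simp only [← MonoidalCategory.whiskerLeft_comp, Category.assoc]
    rw [← Category.assoc (T.obj (𝟙_ V) ◁ μ Y), whisker_exchange]
    have hl' : ψ (𝟙_ V) (T.obj Y) ≫ (ψ₀ ▷ T.obj (T.obj Y)) =
        T.map (λ_ (T.obj Y)).hom ≫ (λ_ (T.obj (T.obj Y))).inv := by
      rw [← ψlef (T.obj Y)]; simp
    rw [Category.assoc, ← Category.assoc (ψ _ _), hl', T.map_comp]
    simp only [Category.assoc]
    rw [← leftUnitor_inv_naturality_assoc]
    simp [munitr]
  · -- (3)
    intro X Y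
    rw [rightWarpAssoc, Category.assoc]
    rw [← leftUnitor_inv_naturality_assoc, ← leftUnitor_inv_naturality_assoc]
    rw [← Category.assoc (η (X ⊗ T.obj Y)), ηop]
    rw [MonoidalCategory.tensorHom_def, Category.assoc, ← MonoidalCategory.whiskerLeft_comp_assoc, munitl]
    rw [leftUnitor_tensor_inv]
    simp
  · -- (4)
    intro X Y
    rw [rightWarpAssoc]
    have hρ : (α_ X (T.obj Y) (𝟙_ V)).inv ≫ (ρ_ (X ⊗ T.obj Y)).hom =
        X ◁ (ρ_ (T.obj Y)).hom := by
      rw [rightUnitor_tensor_hom]; simp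
    simp only [Category.assoc]
    rw [← associator_inv_naturality_right_assoc, hρ]
    simp only [← MonoidalCategory.whiskerLeft_comp, Category.assoc]
    congr 1
    rw [← MonoidalCategory.whiskerLeft_comp_assoc, ← μop0,
      MonoidalCategory.whiskerLeft_comp_assoc]
    slice_lhs 1 2 => rw [← ψnatl]
    simp only [Category.assoc]
    rw [ψrig, ← T.map_comp]
  · -- (5)
    rw [Category.assoc, ← leftUnitor_inv_naturality_assoc, unitors_inv_equal]
    simp only [Iso.inv_hom_id, Category.comp_id, ← Category.assoc]
    rw [ηop0]
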